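/- Let w_1,…,w_n be nonnegative reals summing to W. There exists an assignment (alias table) of values w'_i ∈ [0, w_i] and aliases a_i ∈ {1,…,n} such that for every bucket i, w'_i + (weight assigned to bucket i from item a_i) = W/n, each bucket receives weight from at most one alias, and the total weight assigned to item j across all buckets equals w_j. -/

import Mathlib

open scoped Classical

theorem alias_aux (n : ℕ) (hn : 0 < n) (t : ℝ) :
    ∀ (m : ℕ) (s : Finset (Fin n)) (u : Fin n → ℝ), s.card = m →
      (∀ i ∈ s, 0 ≤ u i) → ∑ i ∈ s, u i = m * t →
      ∃ (w' c : Fin n → ℝ) (a : Fin n → Fin n),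
        (∀ i ∈ s, 0 ≤ w' i ∧ w' i ≤ u i ∧ 0 ≤ c i ∧ w' i + c i = t ∧ a i ∈ s) ∧
        (∀ j ∈ s, w' j + ∑ i ∈ s.filter (fun i => a i = j), c i = u j) := by
  intro m
  induction m with
  | zero =>
    intro s u hcard _ _
    have hs : s = ∅ := Finset.card_eq_zero.mp hcard
    subst hs
    exact ⟨0, 0, fun _ => ⟨0, hn⟩, by simp, by simp⟩
  | succ m ih =>
    intro s u hcard hpos hsum
    have hs : s.Nonempty := Finset.card_pos.mp (by omega)
    push_cast at hsum
    have hi : ∃ i ∈ s, u i ≤ t := by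
      by_contra h
      push_neg at h
      have h1 : (s.card : ℝ) * t < ∑ k ∈ s, u k := by
        calc (s.card : ℝ) * t = ∑ _k ∈ s, t := by
              rw [Finset.sum_const, nsmul_eq_mul]
          _ < ∑ k ∈ s, u k := Finset.sum_lt_sum_of_nonempty hs h
      rw [hsum, hcard] at h1
      push_cast at h1
      exact lt_irrefl _ h1
    have hj : ∃ j ∈ s, t ≤ u j := by
      by_contra h
      push_neg at h
      have h1 : ∑ k ∈ s, u k < (s.card : ℝ) * t := by
        calc ∑ k ∈ s, u k < ∑ _k ∈ s, t := Finset.sum_lt_sum_of_nonempty hs h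
          _ = (s.card : ℝ) * t := by rw [Finset.sum_const, nsmul_eq_mul]
      rw [hsum, hcard] at h1
      push_cast at h1
      exact lt_irrefl _ h1
    obtain ⟨i, his, hit⟩ := hi
    obtain ⟨j, hjs, htj⟩ := hj
    set s' := s.erase i with hs'
    have hi' : i ∉ s' := Finset.notMem_erase i s
    have hins : s = insert i s' := (Finset.insert_erase his).symm
    have hcard' : s'.card = m := by
      rw [hs', Finset.card_erase_of_mem his, hcard]
      omega
    have hsub : s' ⊆ s := Finset.erase_subset i s
    have hsumsplit : u i + ∑ k ∈ s', u k = ∑ k ∈ s, u k :=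
      Finset.add_sum_erase s u his
    by_cases hji : j = i
    · -- u i = t case
      have huit : u i = t := le_antisymm hit (hji ▸ htj)
      have hsum' : ∑ k ∈ s', u k = m * t := by linarith
      obtain ⟨w'', c'', a'', H1, H2⟩ :=
        ih s' u hcard' (fun k hk => hpos k (hsub hk)) hsum'
      refine ⟨Function.update w'' i t, Function.update c'' i 0,
        Function.update a'' i i, ?_, ?_⟩
      · intro k hk
        rcases eq_or_ne k i with heq | hki
        · rw [heq]
          simp only [Function.update_self]
          exact ⟨huit ▸ hpos i his, huit.ge, le_refl 0, add_zero t, his⟩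
        · have hk' : k ∈ s' := Finset.mem_erase.mpr ⟨hki, hk⟩
          obtain ⟨h1, h2, h3, h4, h5⟩ := H1 k hk'
          simp only [Function.update_of_ne hki]
          exact ⟨h1, h2, h3, h4, hsub h5⟩
      · intro m0 hm0
        have keyfilter : ∑ k ∈ s'.filter (fun k => Function.update a'' i i k = m0),
              Function.update c'' i 0 k
            = ∑ k ∈ s'.filter (fun k => a'' k = m0), c'' k := by
          rw [Finset.filter_congr (fun k hk => by
            rw [Function.update_of_ne (Finset.ne_of_mem_erase hk)])]
          exact Finset.sum_congr rfl (fun k hk => by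
            rw [Function.update_of_ne
              (Finset.ne_of_mem_erase (Finset.mem_of_mem_filter _ hk))])
        have hsplit : s.filter (fun k => Function.update a'' i i k = m0)
            = if i = m0
              then insert i (s'.filter (fun k => Function.update a'' i i k = m0))
              else s'.filter (fun k => Function.update a'' i i k = m0) := by
          rw [hins, Finset.filter_insert, Function.update_self]
        have hnotmem : i ∉ s'.filter (fun k => Function.update a'' i i k = m0) :=
          fun hmem => hi' (Finset.mem_of_mem_filter _ hmem)
        rcases eq_or_ne i m0 with heq | hne
        · have hempty : s'.filter (fun k => a'' k = m0) = ∅ := by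
            apply Finset.filter_eq_empty_iff.mpr
            intro k hk hak
            have h5 := (H1 k hk).2.2.2.2
            rw [hak, ← heq] at h5
            exact hi' h5
          rw [hsplit, if_pos heq, Finset.sum_insert hnotmem, keyfilter, hempty]
          rw [← heq]
          simp [huit]
        · have hm0' : m0 ∈ s' := Finset.mem_erase.mpr ⟨fun e => hne e.symm, hm0⟩
          rw [hsplit, if_neg hne, keyfilter,
            Function.update_of_ne (fun e => hne e.symm)]
          exact H2 m0 hm0'
    · -- j ≠ i case
      have hjs' : j ∈ s' := Finset.mem_erase.mpr ⟨hji, hjs⟩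
      set u' := Function.update u j (u j - (t - u i)) with hu'
      have hui0 : 0 ≤ u i := hpos i his
      have hctnn : 0 ≤ t - u i := by linarith
      have hpos' : ∀ k ∈ s', 0 ≤ u' k := by
        intro k hk
        rcases eq_or_ne k j with rfl | hkj
        · rw [hu', Function.update_self]; linarith
        · rw [hu', Function.update_of_ne hkj]; exact hpos k (hsub hk)
      have hsum' : ∑ k ∈ s', u' k = m * t := by
        have h1 : u' j + ∑ k ∈ s'.erase j, u' k = ∑ k ∈ s', u' k :=
          Finset.add_sum_erase s' u' hjs'
        have h2 : u j + ∑ k ∈ s'.erase j, u k = ∑ k ∈ s', u k :=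
          Finset.add_sum_erase s' u hjs'
        have h3 : ∑ k ∈ s'.erase j, u' k = ∑ k ∈ s'.erase j, u k := by
          apply Finset.sum_congr rfl
          intro k hk
          rw [hu', Function.update_of_ne (Finset.ne_of_mem_erase hk)]
        have h4 : u' j = u j - (t - u i) := by rw [hu', Function.update_self]
        linarith
      obtain ⟨w'', c'', a'', H1, H2⟩ := ih s' u' hcard' hpos' hsum'
      refine ⟨Function.update w'' i (u i), Function.update c'' i (t - u i),
        Function.update a'' i j, ?_, ?_⟩
      · intro k hk
        rcases eq_or_ne k i with heq | hki
        · rw [heq]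
          simp only [Function.update_self]
          exact ⟨hui0, le_refl _, hctnn, by ring, hjs⟩
        · have hk' : k ∈ s' := Finset.mem_erase.mpr ⟨hki, hk⟩
          obtain ⟨h1, h2, h3, h4, h5⟩ := H1 k hk'
          simp only [Function.update_of_ne hki]
          refine ⟨h1, le_trans h2 ?_, h3, h4, hsub h5⟩
          rcases eq_or_ne k j with rfl | hkj
          · rw [hu', Function.update_self]; linarith
          · rw [hu', Function.update_of_ne hkj]
      · intro m0 hm0
        have keyfilter : ∑ k ∈ s'.filter (fun k => Function.update a'' i j k = m0),
              Function.update c'' i (t - u i) k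
            = ∑ k ∈ s'.filter (fun k => a'' k = m0), c'' k := by
          rw [Finset.filter_congr (fun k hk => by
            rw [Function.update_of_ne (Finset.ne_of_mem_erase hk)])]
          exact Finset.sum_congr rfl (fun k hk => by
            rw [Function.update_of_ne
              (Finset.ne_of_mem_erase (Finset.mem_of_mem_filter _ hk))])
        have hsplit : s.filter (fun k => Function.update a'' i j k = m0)
            = if j = m0
              then insert i (s'.filter (fun k => Function.update a'' i j k = m0))
              else s'.filter (fun k => Function.update a'' i j k = m0) := by
          rw [hins, Finset.filter_insert, Function.update_self]
        have hnotmem : i ∉ s'.filter (fun k => Function.update a'' i j k = m0) :=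
          fun hmem => hi' (Finset.mem_of_mem_filter _ hmem)
        rcases eq_or_ne m0 i with heq | hm0i
        · -- bucket i: nothing aliased here
          have hempty : s'.filter (fun k => a'' k = m0) = ∅ := by
            apply Finset.filter_eq_empty_iff.mpr
            intro k hk hak
            have h5 := (H1 k hk).2.2.2.2
            rw [hak, heq] at h5
            exact hi' h5
          rw [hsplit, if_neg (fun e => hji (e.trans heq)), keyfilter, hempty]
          rw [heq]
          simp
        · have hm0' : m0 ∈ s' := Finset.mem_erase.mpr ⟨hm0i, hm0⟩
          rcases eq_or_ne m0 j with heq | hm0j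
          · -- bucket j: gets the extra t - u i
            rw [hsplit, if_pos heq.symm, Finset.sum_insert hnotmem, keyfilter,
              Function.update_of_ne hm0i, Function.update_self]
            have hb := H2 m0 hm0'
            rw [hu'] at hb
            rw [heq, Function.update_self] at hb
            rw [heq] at *
            linarith
          · rw [hsplit, if_neg (fun e => hm0j e.symm), keyfilter,
              Function.update_of_ne hm0i]
            have hb := H2 m0 hm0'
            rw [hu', Function.update_of_ne hm0j] at hb
            exact hb

theorem stmt15 (n : ℕ) (hn : 0 < n) (w : Fin n → ℝ) (hw : ∀ i, 0 ≤ w i)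
    (W : ℝ) (hW : W = ∑ i, w i) :
    ∃ (w' c : Fin n → ℝ) (a : Fin n → Fin n),
      (∀ i, 0 ≤ w' i ∧ w' i ≤ w i ∧ 0 ≤ c i ∧ w' i + c i = W / n) ∧
      (∀ j, w' j + ∑ i ∈ Finset.univ.filter (fun i => a i = j), c i = w j) := by
  have hn' : (n : ℝ) ≠ 0 := Nat.cast_ne_zero.mpr hn.ne'
  obtain ⟨w', c, a, H1, H2⟩ := alias_aux n hn (W / n) n Finset.univ w
    (Finset.card_fin n) (fun i _ => hw i)
    (by rw [← hW]; field_simp)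
  refine ⟨w', c, a, fun i => ?_, fun j => ?_⟩
  · obtain ⟨h1, h2, h3, h4, _⟩ := H1 i (Finset.mem_univ i)
    exact ⟨h1, h2, h3, h4⟩
  · exact H2 j (Finset.mem_univ j)
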